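/- For any quasicontinuous function f : X → Y from a topological space X to a metrizable space Y, the set D(f) of points at which f is not continuous is meager in X. -/

import Mathlib

/-- A function is quasicontinuous at `x` if for every neighborhood `U` of `x` and
every neighborhood `V` of `f x` there is a nonempty open `W ⊆ U` with `f '' W ⊆ V`. -/
def Quasicontinuous {X Y : Type*} [TopologicalSpace X] [TopologicalSpace Y] (f : X → Y) : Prop :=
  ∀ x : X, ∀ U ∈ nhds x, ∀ V ∈ nhds (f x),
    ∃ W : Set X, IsOpen W ∧ W.Nonempty ∧ W ⊆ U ∧ f '' W ⊆ V

theorem quasicontinuous_discontinuity_meagre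
    {X Y : Type*} [TopologicalSpace X] [TopologicalSpace Y]
    [TopologicalSpace.MetrizableSpace Y] (f : X → Y)
    (hf : Quasicontinuous f) :
    IsMeagre {x : X | ¬ ContinuousAt f x} := by
  letI : MetricSpace Y := TopologicalSpace.metrizableSpaceMetric Y
  -- oscillation sets
  set S : ℝ → Set X := fun ε =>
    {x | ∀ U ∈ nhds x, ∃ y ∈ U, ∃ z ∈ U, ε ≤ dist (f y) (f z)} with hS
  -- each S ε is closed
  have hclosed : ∀ ε : ℝ, IsClosed (S ε) := by
    intro ε
    rw [← isOpen_compl_iff, isOpen_iff_mem_nhds]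
    intro x hx
    simp only [Set.mem_compl_iff, hS, Set.mem_setOf_eq, not_forall] at hx
    obtain ⟨U, hU, hprop⟩ := hx
    push_neg at hprop
    filter_upwards [interior_mem_nhds.mpr hU] with x' hx'
    simp only [Set.mem_compl_iff, hS, Set.mem_setOf_eq, not_forall]
    refine ⟨U, mem_nhds_iff.mpr ⟨interior U, interior_subset, isOpen_interior, hx'⟩, ?_⟩
    push_neg
    exact hprop
  -- each S ε (ε > 0) has empty interior
  have hint : ∀ ε : ℝ, 0 < ε → interior (S ε) = ∅ := by
    intro ε hε
    by_contra h
    obtain ⟨x, hx⟩ := Set.nonempty_iff_ne_empty.mpr h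
    obtain ⟨W, hWo, ⟨w, hw⟩, hWU, hWV⟩ :=
      hf x (interior (S ε)) (interior_mem_nhds.mpr (mem_interior_iff_mem_nhds.mp hx))
        (Metric.ball (f x) (ε / 2)) (Metric.ball_mem_nhds _ (by linarith))
    have hwS : w ∈ S ε := interior_subset (hWU hw)
    obtain ⟨y, hy, z, hz, hyz⟩ := hwS W (hWo.mem_nhds hw)
    have h1 : dist (f y) (f x) < ε / 2 := hWV ⟨y, hy, rfl⟩
    have h2 : dist (f z) (f x) < ε / 2 := hWV ⟨z, hz, rfl⟩
    have := dist_triangle_right (f y) (f z) (f x)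
    linarith
  -- each S ε (ε > 0) is meagre
  have hmeagre : ∀ ε : ℝ, 0 < ε → IsMeagre (S ε) := by
    intro ε hε
    have : IsOpen (S ε)ᶜ ∧ Dense (S ε)ᶜ := by
      rw [← isClosed_isNowhereDense_iff_compl]
      exact ⟨hclosed ε, ((hclosed ε).isNowhereDense_iff).mpr (hint ε hε)⟩
    exact residual_of_dense_open this.1 this.2
  -- discontinuity set is contained in the union
  have hsub : {x : X | ¬ ContinuousAt f x} ⊆ ⋃ n : ℕ, S (1 / (n + 1)) := by
    intro x hx
    simp only [Set.mem_setOf_eq, ContinuousAt, Metric.tendsto_nhds] at hx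
    push_neg at hx
    obtain ⟨δ, hδ, hxδ⟩ := hx
    obtain ⟨n, hn⟩ := exists_nat_one_div_lt hδ
    refine Set.mem_iUnion.mpr ⟨n, ?_⟩
    intro U hU
    have hxδ : ∀ U ∈ nhds x, ∃ y ∈ U, δ ≤ dist (f y) (f x) := fun U hU => Filter.frequently_iff.mp hxδ hU
    obtain ⟨y, hy, hyd⟩ := hxδ U hU
    exact ⟨y, hy, x, mem_of_mem_nhds hU, le_trans hn.le hyd⟩
  exact (isMeagre_iUnion fun n => hmeagre _ (by positivity)).mono hsub
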